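/- (Proposition 2, MSE part, discrete form.) Let Ω be a finite probability space and let y : Ω → ℝ, x : Ω → Fin b, z : Ω → ℝ be random variables such that y and z are conditionally independent given x. Then the generalized mean square error Var(y) * exp(-2 * I(y; z)) + (E[y - z])² satisfies Var(y) * exp(-2 * I(y; z)) + (E[y - z])² ≥ Var(y) * exp(-2 * I(y; x)), with equality when I(y; x | z) = 0 and E[y] = E[z]. (Interpretation: the lowest generalized MSE achievable by a supervised learner using x to predict y is e^{-2 I(y; x)} Var(y), achieved by the oracle unbiased learner.) -/

import Mathlib

/-- Expectation on a finite probability space with weights `w`. -/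
noncomputable def fexp {Ω : Type*} [Fintype Ω] (w : Ω → ℝ) (f : Ω → ℝ) : ℝ :=
  ∑ ω, w ω * f ω

/-- Variance on a finite probability space with weights `w`. -/
noncomputable def fvar {Ω : Type*} [Fintype Ω] (w : Ω → ℝ) (f : Ω → ℝ) : ℝ :=
  fexp w (fun ω => (f ω - fexp w f) ^ 2)

/-- Marginal pmf `P(u = a)` of a random variable `u` on a finite probability
space with weights `w`. -/
noncomputable def margP {Ω α : Type*} [Fintype Ω] [DecidableEq α]
    (w : Ω → ℝ) (u : Ω → α) (a : α) : ℝ :=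
  ∑ ω ∈ Finset.univ.filter (fun ω => u ω = a), w ω

/-- Joint pmf `P(u = a, v = b)` of a pair of random variables. -/
noncomputable def jointP {Ω α β : Type*} [Fintype Ω] [DecidableEq α] [DecidableEq β]
    (w : Ω → ℝ) (u : Ω → α) (v : Ω → β) (t : α × β) : ℝ :=
  ∑ ω ∈ Finset.univ.filter (fun ω => u ω = t.1 ∧ v ω = t.2), w ω

/-- Joint pmf `P(u = a, v = b, r = c)` of a triple of random variables. -/
noncomputable def joint3P {Ω α β γ : Type*} [Fintype Ω] [DecidableEq α]
    [DecidableEq β] [DecidableEq γ]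
    (w : Ω → ℝ) (u : Ω → α) (v : Ω → β) (r : Ω → γ) (t : α × β × γ) : ℝ :=
  ∑ ω ∈ Finset.univ.filter (fun ω => u ω = t.1 ∧ v ω = t.2.1 ∧ r ω = t.2.2), w ω

/-- Mutual information `I(u; v)` (in nats) of two random variables on a finite
probability space, summing over pairs of values with positive probability. -/
noncomputable def MI {Ω α β : Type*} [Fintype Ω] [DecidableEq α] [DecidableEq β]
    (w : Ω → ℝ) (u : Ω → α) (v : Ω → β) : ℝ :=
  ∑ t ∈ (Finset.univ.image (fun ω => (u ω, v ω))).filter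
      (fun t => 0 < jointP w u v t),
    jointP w u v t * Real.log (jointP w u v t / (margP w u t.1 * margP w v t.2))

/-- Conditional mutual information `I(u; v | r)` (in nats). -/
noncomputable def condMI {Ω α β γ : Type*} [Fintype Ω] [DecidableEq α]
    [DecidableEq β] [DecidableEq γ]
    (w : Ω → ℝ) (u : Ω → α) (v : Ω → β) (r : Ω → γ) : ℝ :=
  ∑ t ∈ (Finset.univ.image (fun ω => (u ω, v ω, r ω))).filter
      (fun t => 0 < joint3P w u v r t),
    joint3P w u v r t * Real.log (joint3P w u v r t * margP w r t.2.2 /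
      (jointP w u r (t.1, t.2.2) * jointP w v r (t.2.1, t.2.2)))


open Finset

section aux

variable {Ω : Type*} [Fintype Ω]

noncomputable def pmf' {τ : Type*} [DecidableEq τ] (w : Ω → ℝ) (φ : Ω → τ) (t : τ) : ℝ :=
  ∑ ω ∈ Finset.univ.filter (fun ω => φ ω = t), w ω

lemma pmf'_nonneg {τ : Type*} [DecidableEq τ] {w : Ω → ℝ} (hw0 : ∀ ω, 0 ≤ w ω)
    (φ : Ω → τ) (t : τ) : 0 ≤ pmf' w φ t :=
  Finset.sum_nonneg fun ω _ => hw0 ω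

lemma pmf'_pos {τ : Type*} [DecidableEq τ] {w : Ω → ℝ} (hw0 : ∀ ω, 0 ≤ w ω)
    (φ : Ω → τ) {ω : Ω} (h : 0 < w ω) : 0 < pmf' w φ (φ ω) :=
  lt_of_lt_of_le h (Finset.single_le_sum (fun i _ => hw0 i) (by simp))

lemma pmf'_zero_of_not_mem {τ : Type*} [DecidableEq τ] (w : Ω → ℝ) (φ : Ω → τ)
    {t : τ} (h : t ∉ Finset.univ.image φ) : pmf' w φ t = 0 := by
  have he : Finset.univ.filter (fun ω => φ ω = t) = ∅ := by
    apply Finset.filter_eq_empty_iff.mpr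
    intro ω _ hωt
    exact h (hωt ▸ Finset.mem_image_of_mem φ (Finset.mem_univ ω))
  rw [pmf', he, Finset.sum_empty]

lemma sum_pmf'_image {τ : Type*} [DecidableEq τ] (w : Ω → ℝ) (φ : Ω → τ) :
    ∑ t ∈ Finset.univ.image φ, pmf' w φ t = ∑ ω, w ω :=
  Finset.sum_fiberwise_of_maps_to (fun ω _ => Finset.mem_image_of_mem φ (Finset.mem_univ ω)) w

lemma sum_pmf'_mul {τ : Type*} [DecidableEq τ] {w : Ω → ℝ} (hw0 : ∀ ω, 0 ≤ w ω)
    (φ : Ω → τ) (g : τ → ℝ) :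
    ∑ t ∈ (Finset.univ.image φ).filter (fun t => 0 < pmf' w φ t),
      pmf' w φ t * g t = ∑ ω, w ω * g (φ ω) := by
  rw [Finset.sum_subset (Finset.filter_subset _ _) (fun t ht hts => ?_)]
  · rw [← Finset.sum_fiberwise_of_maps_to
      (fun ω _ => Finset.mem_image_of_mem φ (Finset.mem_univ ω)) (fun ω => w ω * g (φ ω))]
    refine Finset.sum_congr rfl fun t ht => ?_
    rw [pmf', Finset.sum_mul]
    exact Finset.sum_congr rfl fun ω hω => by rw [(Finset.mem_filter.mp hω).2]
  · have h0 : pmf' w φ t = 0 := le_antisymm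
      (not_lt.mp (fun h => hts (Finset.mem_filter.mpr ⟨ht, h⟩))) (pmf'_nonneg hw0 φ t)
    rw [h0, zero_mul]


lemma margP_eq {α : Type*} [DecidableEq α] (w : Ω → ℝ) (u : Ω → α) (a : α) :
    margP w u a = pmf' w u a := rfl

lemma jointP_eq {α β : Type*} [DecidableEq α] [DecidableEq β]
    (w : Ω → ℝ) (u : Ω → α) (v : Ω → β) (t : α × β) :
    jointP w u v t = pmf' w (fun ω => (u ω, v ω)) t := by
  unfold jointP pmf'
  apply Finset.sum_congr _ (fun _ _ => rfl)
  ext ω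
  simp [Prod.ext_iff]

lemma joint3P_eq {α β γ : Type*} [DecidableEq α] [DecidableEq β] [DecidableEq γ]
    (w : Ω → ℝ) (u : Ω → α) (v : Ω → β) (r : Ω → γ) (t : α × β × γ) :
    joint3P w u v r t = pmf' w (fun ω => (u ω, v ω, r ω)) t := by
  unfold joint3P pmf'
  apply Finset.sum_congr _ (fun _ _ => rfl)
  ext ω
  simp [Prod.ext_iff]

lemma jointP_comm {α β : Type*} [DecidableEq α] [DecidableEq β]
    (w : Ω → ℝ) (u : Ω → α) (v : Ω → β) (a : α) (c : β) :
    jointP w u v (a, c) = jointP w v u (c, a) := by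
  unfold jointP
  apply Finset.sum_congr _ (fun _ _ => rfl)
  ext ω
  simp [and_comm]

lemma joint3P_swap {α β γ : Type*} [DecidableEq α] [DecidableEq β] [DecidableEq γ]
    (w : Ω → ℝ) (u : Ω → α) (v : Ω → β) (r : Ω → γ) (a : α) (c : β) (d : γ) :
    joint3P w u v r (a, c, d) = joint3P w u r v (a, d, c) := by
  unfold joint3P
  apply Finset.sum_congr _ (fun _ _ => rfl)
  ext ω
  simp only [Finset.mem_filter]
  tauto

lemma MI_eq {α β : Type*} [DecidableEq α] [DecidableEq β] {w : Ω → ℝ}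
    (hw0 : ∀ ω, 0 ≤ w ω) (u : Ω → α) (v : Ω → β) :
    MI w u v = ∑ ω, w ω *
      Real.log (jointP w u v (u ω, v ω) / (margP w u (u ω) * margP w v (v ω))) := by
  have h := sum_pmf'_mul hw0 (fun ω => (u ω, v ω))
      (fun t => Real.log (jointP w u v t / (margP w u t.1 * margP w v t.2)))
  rw [MI]
  simp only [jointP_eq w u v] at h ⊢
  simpa using h

lemma condMI_eq {α β γ : Type*} [DecidableEq α] [DecidableEq β] [DecidableEq γ]
    {w : Ω → ℝ} (hw0 : ∀ ω, 0 ≤ w ω) (u : Ω → α) (v : Ω → β) (r : Ω → γ) :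
    condMI w u v r = ∑ ω, w ω *
      Real.log (joint3P w u v r (u ω, v ω, r ω) * margP w r (r ω) /
        (jointP w u r (u ω, r ω) * jointP w v r (v ω, r ω))) := by
  have h := sum_pmf'_mul hw0 (fun ω => (u ω, v ω, r ω))
      (fun t => Real.log (joint3P w u v r t * margP w r t.2.2 /
        (jointP w u r (t.1, t.2.2) * jointP w v r (t.2.1, t.2.2))))
  rw [condMI]
  simp only [joint3P_eq w u v r] at h ⊢
  simpa using h

lemma chain_rule {α β γ : Type*} [DecidableEq α] [DecidableEq β] [DecidableEq γ]
    {w : Ω → ℝ} (hw0 : ∀ ω, 0 ≤ w ω) (u : Ω → α) (v : Ω → β) (r : Ω → γ) :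
    MI w u v + condMI w u r v = MI w u r + condMI w u v r := by
  rw [MI_eq hw0 u v, MI_eq hw0 u r, condMI_eq hw0 u r v, condMI_eq hw0 u v r,
    ← Finset.sum_add_distrib, ← Finset.sum_add_distrib]
  refine Finset.sum_congr rfl fun ω _ => ?_
  rcases eq_or_lt_of_le (hw0 ω) with h0 | h0
  · rw [← h0]; ring
  rw [← mul_add, ← mul_add]
  congr 1
  -- positivity of all the probabilities appearing
  have hPu : 0 < margP w u (u ω) := pmf'_pos hw0 u h0
  have hPv : 0 < margP w v (v ω) := pmf'_pos hw0 v h0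
  have hPr : 0 < margP w r (r ω) := pmf'_pos hw0 r h0
  have hPuv : 0 < jointP w u v (u ω, v ω) := by
    rw [jointP_eq]; exact pmf'_pos hw0 _ h0
  have hPur : 0 < jointP w u r (u ω, r ω) := by
    rw [jointP_eq]; exact pmf'_pos hw0 _ h0
  have hPvr : 0 < jointP w v r (v ω, r ω) := by
    rw [jointP_eq]; exact pmf'_pos hw0 _ h0
  have hPrv : 0 < jointP w r v (r ω, v ω) := by
    rw [jointP_eq]; exact pmf'_pos hw0 _ h0
  have hQ : 0 < joint3P w u v r (u ω, v ω, r ω) := by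
    rw [joint3P_eq]; exact pmf'_pos hw0 _ h0
  have hQ' : joint3P w u r v (u ω, r ω, v ω) = joint3P w u v r (u ω, v ω, r ω) :=
    (joint3P_swap w u v r (u ω) (v ω) (r ω)).symm
  have hPrv' : jointP w r v (r ω, v ω) = jointP w v r (v ω, r ω) :=
    jointP_comm w r v (r ω) (v ω)
  rw [hQ', hPrv']
  have e1 : 0 < jointP w u v (u ω, v ω) / (margP w u (u ω) * margP w v (v ω)) :=
    div_pos hPuv (mul_pos hPu hPv)
  have e2 : 0 < joint3P w u v r (u ω, v ω, r ω) * margP w v (v ω) /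
      (jointP w u v (u ω, v ω) * jointP w v r (v ω, r ω)) :=
    div_pos (mul_pos hQ hPv) (mul_pos hPuv hPvr)
  have e3 : 0 < jointP w u r (u ω, r ω) / (margP w u (u ω) * margP w r (r ω)) :=
    div_pos hPur (mul_pos hPu hPr)
  have e4 : 0 < joint3P w u v r (u ω, v ω, r ω) * margP w r (r ω) /
      (jointP w u r (u ω, r ω) * jointP w v r (v ω, r ω)) :=
    div_pos (mul_pos hQ hPr) (mul_pos hPur hPvr)
  rw [← Real.log_mul (ne_of_gt e1) (ne_of_gt e2), ← Real.log_mul (ne_of_gt e3) (ne_of_gt e4)]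
  congr 1
  have n1 := ne_of_gt hPu
  have n2 := ne_of_gt hPv
  have n3 := ne_of_gt hPr
  have n4 := ne_of_gt hPuv
  have n5 := ne_of_gt hPur
  have n6 := ne_of_gt hPvr
  field_simp

lemma jointP_le_margP_snd {α β : Type*} [DecidableEq α] [DecidableEq β]
    {w : Ω → ℝ} (hw0 : ∀ ω, 0 ≤ w ω) (u : Ω → α) (v : Ω → β) (a : α) (c : β) :
    jointP w u v (a, c) ≤ margP w v c := by
  apply Finset.sum_le_sum_of_subset_of_nonneg
  · intro ω hω
    simp only [Finset.mem_filter] at hω ⊢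
    tauto
  · exact fun ω _ _ => hw0 ω

lemma joint3P_le_jointP13 {α β γ : Type*} [DecidableEq α] [DecidableEq β] [DecidableEq γ]
    {w : Ω → ℝ} (hw0 : ∀ ω, 0 ≤ w ω) (u : Ω → α) (v : Ω → β) (r : Ω → γ)
    (a : α) (c : β) (d : γ) :
    joint3P w u v r (a, c, d) ≤ jointP w u r (a, d) := by
  apply Finset.sum_le_sum_of_subset_of_nonneg
  · intro ω hω
    simp only [Finset.mem_filter] at hω ⊢
    tauto
  · exact fun ω _ _ => hw0 ω

lemma joint3P_le_jointP23 {α β γ : Type*} [DecidableEq α] [DecidableEq β] [DecidableEq γ]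
    {w : Ω → ℝ} (hw0 : ∀ ω, 0 ≤ w ω) (u : Ω → α) (v : Ω → β) (r : Ω → γ)
    (a : α) (c : β) (d : γ) :
    joint3P w u v r (a, c, d) ≤ jointP w v r (c, d) := by
  apply Finset.sum_le_sum_of_subset_of_nonneg
  · intro ω hω
    simp only [Finset.mem_filter] at hω ⊢
    tauto
  · exact fun ω _ _ => hw0 ω

lemma joint3P_le_margP3 {α β γ : Type*} [DecidableEq α] [DecidableEq β] [DecidableEq γ]
    {w : Ω → ℝ} (hw0 : ∀ ω, 0 ≤ w ω) (u : Ω → α) (v : Ω → β) (r : Ω → γ)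
    (a : α) (c : β) (d : γ) :
    joint3P w u v r (a, c, d) ≤ margP w r d := by
  apply Finset.sum_le_sum_of_subset_of_nonneg
  · intro ω hω
    simp only [Finset.mem_filter] at hω ⊢
    tauto
  · exact fun ω _ _ => hw0 ω

lemma sum_jointP_fst {α β : Type*} [DecidableEq α] [DecidableEq β] [Fintype α]
    (w : Ω → ℝ) (u : Ω → α) (v : Ω → β) (c : β) :
    ∑ a, jointP w u v (a, c) = margP w v c := by
  unfold jointP margP
  have h : ∀ a : α, Finset.univ.filter (fun ω => u ω = a ∧ v ω = c)
      = (Finset.univ.filter (fun ω => v ω = c)).filter (fun ω => u ω = a) := by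
    intro a
    rw [Finset.filter_filter]
    apply Finset.filter_congr
    intro ω _
    simp [and_comm]
  simp only [h]
  exact Finset.sum_fiberwise _ _ _

lemma condMI_nonneg {α β γ : Type*} [DecidableEq α] [DecidableEq β] [DecidableEq γ]
    [Fintype β] {w : Ω → ℝ} (hw0 : ∀ ω, 0 ≤ w ω) (hw1 : ∑ ω, w ω = 1)
    (u : Ω → α) (v : Ω → β) (r : Ω → γ) : 0 ≤ condMI w u v r := by
  classical
  set φ : Ω → α × β × γ := fun ω => (u ω, v ω, r ω) with hφ
  set S := (Finset.univ.image φ).filter (fun t => 0 < joint3P w u v r t) with hS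
  have hSmem : ∀ t ∈ S, t ∈ Finset.univ.image φ ∧ 0 < joint3P w u v r t := by
    intro t ht; exact Finset.mem_filter.mp ht
  -- the "A" quantity
  set A : α × β × γ → ℝ := fun t => jointP w u r (t.1, t.2.2) * jointP w v r (t.2.1, t.2.2) /
      (joint3P w u v r t * margP w r t.2.2) with hA
  have hApos : ∀ t ∈ S, 0 < A t := by
    intro t ht
    obtain ⟨_, hq⟩ := hSmem t ht
    have h1 : 0 < jointP w u r (t.1, t.2.2) :=
      lt_of_lt_of_le hq (joint3P_le_jointP13 hw0 u v r t.1 t.2.1 t.2.2)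
    have h2 : 0 < jointP w v r (t.2.1, t.2.2) :=
      lt_of_lt_of_le hq (joint3P_le_jointP23 hw0 u v r t.1 t.2.1 t.2.2)
    have h3 : 0 < margP w r t.2.2 :=
      lt_of_lt_of_le hq (joint3P_le_margP3 hw0 u v r t.1 t.2.1 t.2.2)
    exact div_pos (mul_pos h1 h2) (mul_pos hq h3)
  -- condMI as sum of -q log A
  have hrw : condMI w u v r = ∑ t ∈ S, -(joint3P w u v r t * Real.log (A t)) := by
    rw [condMI]
    refine Finset.sum_congr rfl fun t ht => ?_
    have : joint3P w u v r t * margP w r t.2.2 /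
        (jointP w u r (t.1, t.2.2) * jointP w v r (t.2.1, t.2.2)) = (A t)⁻¹ := by
      rw [hA]; simp [inv_div]
    rw [this, Real.log_inv]
    ring
  -- pointwise bound
  have hbd : ∀ t ∈ S, joint3P w u v r t - joint3P w u v r t * A t
      ≤ -(joint3P w u v r t * Real.log (A t)) := by
    intro t ht
    have hq := (hSmem t ht).2
    have hlog := Real.log_le_sub_one_of_pos (hApos t ht)
    nlinarith
  have hsum1 : ∑ t ∈ S, joint3P w u v r t = 1 := by
    have h := sum_pmf'_mul hw0 φ (fun _ => 1)
    simp only [mul_one] at h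
    rw [hw1] at h
    rw [hS]
    simp only [joint3P_eq w u v r]
    exact h
  -- the qA sum
  have hqA : ∀ t ∈ S, joint3P w u v r t * A t =
      jointP w u r (t.1, t.2.2) * jointP w v r (t.2.1, t.2.2) / margP w r t.2.2 := by
    intro t ht
    have hq := (hSmem t ht).2
    simp only [hA]
    rw [mul_div_assoc', mul_div_mul_left _ _ (ne_of_gt hq)]
  have hsum2 : ∑ t ∈ S, joint3P w u v r t * A t ≤ 1 := by
    rw [Finset.sum_congr rfl hqA]
    set f : α × β × γ → ℝ := fun t =>
      jointP w u r (t.1, t.2.2) * jointP w v r (t.2.1, t.2.2) / margP w r t.2.2 with hf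
    have hfnn : ∀ t, 0 ≤ f t := by
      intro t
      refine div_nonneg (mul_nonneg ?_ ?_) ?_
      · rw [jointP_eq]; exact pmf'_nonneg hw0 _ _
      · rw [jointP_eq]; exact pmf'_nonneg hw0 _ _
      · exact pmf'_nonneg hw0 _ _
    set T := (Finset.univ.image u) ×ˢ ((Finset.univ : Finset β) ×ˢ (Finset.univ.image r)) with hT
    have hsub : S ⊆ T := by
      intro t ht
      obtain ⟨hti, _⟩ := hSmem t ht
      obtain ⟨ω, _, hω⟩ := Finset.mem_image.mp hti
      rw [hT, Finset.mem_product, Finset.mem_product]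
      refine ⟨?_, Finset.mem_univ _, ?_⟩
      · rw [← hω]; exact Finset.mem_image_of_mem u (Finset.mem_univ ω)
      · rw [← hω]; exact Finset.mem_image_of_mem r (Finset.mem_univ ω)
    calc ∑ t ∈ S, f t ≤ ∑ t ∈ T, f t :=
          Finset.sum_le_sum_of_subset_of_nonneg hsub (fun t _ _ => hfnn t)
      _ ≤ 1 := by
          rw [hT, Finset.sum_product, ]
          simp only [Finset.sum_product]
          have step1 : ∀ a ∈ Finset.univ.image u,
              ∑ c ∈ (Finset.univ : Finset β), ∑ d ∈ Finset.univ.image r, f (a, c, d)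
              ≤ ∑ d ∈ Finset.univ.image r, jointP w u r (a, d) := by
            intro a _
            rw [Finset.sum_comm]
            apply Finset.sum_le_sum
            intro d _
            have : ∑ c ∈ (Finset.univ : Finset β), f (a, c, d)
                = jointP w u r (a, d) * margP w r d / margP w r d := by
              rw [hf]
              simp only []
              rw [← Finset.sum_div, ← Finset.mul_sum]
              congr 2
              exact sum_jointP_fst w v r d
            rw [this]
            rcases eq_or_ne (margP w r d) 0 with h0 | h0
            · rw [h0, div_zero]
              rw [jointP_eq]; exact pmf'_nonneg hw0 _ _
            · rw [mul_div_assoc, div_self h0, mul_one]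
          calc ∑ a ∈ Finset.univ.image u, ∑ c ∈ (Finset.univ : Finset β),
                  ∑ d ∈ Finset.univ.image r, f (a, c, d)
              ≤ ∑ a ∈ Finset.univ.image u, ∑ d ∈ Finset.univ.image r, jointP w u r (a, d) :=
                Finset.sum_le_sum step1
            _ = ∑ t ∈ (Finset.univ.image u) ×ˢ (Finset.univ.image r), jointP w u r t := by
                rw [Finset.sum_product]
            _ = 1 := by
                simp only [jointP_eq w u r]
                rw [← Finset.sum_subset (s₁ := Finset.univ.image (fun ω => (u ω, r ω)))
                  (fun t ht => ?_) (fun t _ ht => pmf'_zero_of_not_mem w _ ht)]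
                · rw [sum_pmf'_image, hw1]
                · obtain ⟨ω, _, hω⟩ := Finset.mem_image.mp ht
                  rw [Finset.mem_product, ← hω]
                  exact ⟨Finset.mem_image_of_mem u (Finset.mem_univ ω),
                    Finset.mem_image_of_mem r (Finset.mem_univ ω)⟩
  calc (0:ℝ) = 1 - 1 := by ring
    _ ≤ ∑ t ∈ S, joint3P w u v r t - ∑ t ∈ S, joint3P w u v r t * A t := by
        rw [hsum1]; linarith
    _ = ∑ t ∈ S, (joint3P w u v r t - joint3P w u v r t * A t) := by
        rw [Finset.sum_sub_distrib]
    _ ≤ ∑ t ∈ S, -(joint3P w u v r t * Real.log (A t)) := Finset.sum_le_sum hbd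
    _ = condMI w u v r := hrw.symm

end aux

/-- Proposition 2, MSE part, discrete form: on a finite
probability space, if `y` and `z` are conditionally independent given `x`,
then the generalized MSE `Var(y) exp(-2 I(y; z)) + (E[y - z])²` is at least
`Var(y) exp(-2 I(y; x))`, with equality when `I(y; x | z) = 0` and
`E[y] = E[z]`. -/
theorem stmt_16 {Ω : Type*} [Fintype Ω] (b : ℕ)
    (w : Ω → ℝ) (hw0 : ∀ ω, 0 ≤ w ω) (hw1 : ∑ ω, w ω = 1)
    (y : Ω → ℝ) (x : Ω → Fin b) (z : Ω → ℝ)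
    (hci : ∀ (i : ℝ) (j : Fin b) (k : ℝ),
      joint3P w y x z (i, j, k) * margP w x j =
        jointP w y x (i, j) * jointP w x z (j, k)) :
    fvar w y * Real.exp (-2 * MI w y x) ≤
      fvar w y * Real.exp (-2 * MI w y z) + (fexp w (fun ω => y ω - z ω)) ^ 2 ∧
    (condMI w y x z = 0 ∧ fexp w y = fexp w z →
      fvar w y * Real.exp (-2 * MI w y z) + (fexp w (fun ω => y ω - z ω)) ^ 2 =
        fvar w y * Real.exp (-2 * MI w y x)) := by
  have hvar : 0 ≤ fvar w y := Finset.sum_nonneg fun ω _ => mul_nonneg (hw0 ω) (sq_nonneg _)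
  -- conditional independence kills I(y ; z | x)
  have hzero : condMI w y z x = 0 := by
    rw [condMI_eq hw0 y z x]
    apply Finset.sum_eq_zero
    intro ω _
    rcases eq_or_lt_of_le (hw0 ω) with h0 | h0
    · rw [← h0, zero_mul]
    have hnum : joint3P w y z x (y ω, z ω, x ω) * margP w x (x ω)
        = jointP w y x (y ω, x ω) * jointP w z x (z ω, x ω) := by
      rw [joint3P_swap w y z x (y ω) (z ω) (x ω), jointP_comm w z x (z ω) (x ω)]
      exact hci (y ω) (x ω) (z ω)
    rw [hnum]
    have hPyx : 0 < jointP w y x (y ω, x ω) := by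
      rw [jointP_eq]; exact pmf'_pos hw0 _ h0
    have hPzx : 0 < jointP w z x (z ω, x ω) := by
      rw [jointP_eq]; exact pmf'_pos hw0 _ h0
    rw [div_self (ne_of_gt (mul_pos hPyx hPzx)), Real.log_one, mul_zero]
  have hchain := chain_rule hw0 y x z
  rw [hzero, add_zero] at hchain
  have hnn : 0 ≤ condMI w y x z := condMI_nonneg hw0 hw1 y x z
  constructor
  · have hle : MI w y z ≤ MI w y x := by linarith
    have hexp : Real.exp (-2 * MI w y x) ≤ Real.exp (-2 * MI w y z) :=
      Real.exp_le_exp.mpr (by linarith)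
    nlinarith [sq_nonneg (fexp w (fun ω => y ω - z ω))]
  · rintro ⟨h1, h2⟩
    have hMIeq : MI w y x = MI w y z := by rw [hchain, h1, add_zero]
    have hfe : fexp w (fun ω => y ω - z ω) = 0 := by
      have he : fexp w (fun ω => y ω - z ω) = fexp w y - fexp w z := by
        unfold fexp
        rw [← Finset.sum_sub_distrib]
        exact Finset.sum_congr rfl fun ω _ => by ring
      rw [he, h2, sub_self]
    rw [hMIeq, hfe]
    ring
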